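/- Let m ≥ 1 and let 0 ≤ d'_0 ≤ d'_1 ≤ … ≤ d'_m be integers. Set S = Σ_{j=0}^m d'_j and let ŝ ∈ ℤ^m be the vector with ŝ_i = d'_0 − d'_i for 1 ≤ i ≤ m. Then min{ ‖ŝ − v‖² : v ∈ ℤ^m, Σ_{i=1}^m v_i = d'_0 } = m·{S/m}·(1 − {S/m}) + S²/m + m·(d'_0)² − 2·d'_0·S, where {x} denotes the fractional part of x. Moreover, the number of v ∈ ℤ^m with Σ v_i = d'_0 attaining this minimum equals the binomial coefficient C(m, |S − m·⌊S/m + 1/2⌋|). -/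

import Mathlib

set_option maxHeartbeats 1000000

lemma int_le_sq (x : ℤ) : x ≤ x ^ 2 := by nlinarith [sq_nonneg x, sq_nonneg (x - 1)]

lemma floor_int_div_nat_real (a : ℤ) (n : ℕ) : ⌊(a : ℝ) / (n : ℝ)⌋ = a / n := by
  have h : ((a:ℝ)/(n:ℝ)) = (Rat.cast ((a : ℚ) / (n : ℚ)) : ℝ) := by push_cast; ring
  rw [h, Rat.floor_cast, Rat.floor_intCast_div_natCast]

lemma aux_min (m : ℕ) (q r : ℤ) (hr0 : 0 ≤ r)
    (w : Fin m → ℤ) (hw : (∑ i, w i) = m * q + r) :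
    m * q ^ 2 + 2 * q * r + r ≤ ∑ i, (w i) ^ 2 ∧
    ((∑ i, (w i) ^ 2) = m * q ^ 2 + 2 * q * r + r ↔
      ∃ A : Finset (Fin m), A.card = r.toNat ∧
        w = fun i => q + if i ∈ A then 1 else 0) := by
  have hx : ∑ i, (w i - q) = r := by
    rw [Finset.sum_sub_distrib, hw, Finset.sum_const, Finset.card_univ,
      Fintype.card_fin, nsmul_eq_mul]; ring
  have hexp : ∑ i, (w i) ^ 2 =
      (∑ i, (w i - q) ^ 2) + 2 * q * r + m * q ^ 2 := by
    have h1 : ∑ i, (w i) ^ 2 =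
        ∑ i, ((w i - q) ^ 2 + 2 * q * (w i - q) + q ^ 2) :=
      Finset.sum_congr rfl (fun i _ => by ring)
    rw [h1, Finset.sum_add_distrib, Finset.sum_add_distrib, ← Finset.mul_sum, hx,
      Finset.sum_const, Finset.card_univ, Fintype.card_fin, nsmul_eq_mul]
  constructor
  · have : r ≤ ∑ i, (w i - q) ^ 2 := by
      rw [← hx]
      exact Finset.sum_le_sum (fun i _ => int_le_sq _)
    linarith [hexp]
  constructor
  · intro heq
    have hsum0 : ∑ i, ((w i - q) ^ 2 - (w i - q)) = 0 := by
      rw [Finset.sum_sub_distrib, hx]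
      omega
    have hterm : ∀ i ∈ Finset.univ, (0:ℤ) ≤ (w i - q) ^ 2 - (w i - q) :=
      fun i _ => by linarith [int_le_sq (w i - q)]
    have hall := (Finset.sum_eq_zero_iff_of_nonneg hterm).mp hsum0
    have h01 : ∀ i, w i = q ∨ w i = q + 1 := by
      intro i
      have := hall i (Finset.mem_univ i)
      have h2 : (w i - q) * (w i - q - 1) = 0 := by ring_nf; ring_nf at this; linarith
      rcases mul_eq_zero.mp h2 with h | h <;> omega
    refine ⟨Finset.univ.filter (fun i => w i = q + 1), ?_, ?_⟩
    · have hcount : ∑ i, (w i - q) =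
          ((Finset.univ.filter (fun i => w i = q + 1)).card : ℤ) := by
        rw [Finset.card_filter]
        push_cast
        refine Finset.sum_congr rfl (fun i _ => ?_)
        rcases h01 i with h | h <;> simp [h]
      omega
    · funext i
      rcases h01 i with h | h <;>
        simp [h, Finset.mem_filter]
  · rintro ⟨A, hA, rfl⟩
    have hAr : (A.card : ℤ) = r := by omega
    have hchi : ∑ i, (if i ∈ A then (1:ℤ) else 0) = A.card := by
      simp [Finset.sum_ite_mem]
    have : ∑ i, (q + if i ∈ A then (1:ℤ) else 0) ^ 2 =
        ∑ i, (q ^ 2 + (2 * q + 1) * (if i ∈ A then (1:ℤ) else 0)) := by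
      refine Finset.sum_congr rfl (fun i _ => ?_)
      by_cases h : i ∈ A <;> simp [h] <;> ring
    rw [this, Finset.sum_add_distrib, ← Finset.mul_sum, hchi, hAr,
      Finset.sum_const, Finset.card_univ, Fintype.card_fin, nsmul_eq_mul]
    ring

theorem stmt11 (m : ℕ) (hm : 1 ≤ m) (d' : ℕ → ℕ)
    (hmono : ∀ i : ℕ, i < m → d' i ≤ d' (i + 1)) :
    let S : ℤ := ∑ j ∈ Finset.range (m + 1), (d' j : ℤ)
    let sh : Fin m → ℤ := fun i => (d' 0 : ℤ) - (d' ((i : ℕ) + 1) : ℤ)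
    let Dhat : ℕ := sInf {n : ℕ | ∃ v : Fin m → ℤ,
      (∑ i, v i) = (d' 0 : ℤ) ∧ (∑ i, (sh i - v i) ^ 2) = (n : ℤ)}
    (Dhat : ℝ) = m * Int.fract ((S : ℝ) / m) * (1 - Int.fract ((S : ℝ) / m)) +
          (S : ℝ) ^ 2 / m + m * (d' 0 : ℝ) ^ 2 - 2 * (d' 0 : ℝ) * (S : ℝ) ∧
      {v : Fin m → ℤ |
          (∑ i, v i) = (d' 0 : ℤ) ∧ (∑ i, (sh i - v i) ^ 2) = (Dhat : ℤ)}.ncard =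
        m.choose (S - (m : ℤ) * ⌊(S : ℝ) / m + 1 / 2⌋).natAbs := by
  intro S sh Dhat
  have hSdef : S = ∑ j ∈ Finset.range (m + 1), (d' j : ℤ) := rfl
  have hm' : (0:ℤ) < (m:ℤ) := by exact_mod_cast hm
  set T : ℤ := (m : ℤ) * (d' 0 : ℤ) - S with hTdef
  set q : ℤ := T / (m:ℤ) with hqdef
  set r : ℤ := T % (m:ℤ) with hrdef
  have hr0 : 0 ≤ r := Int.emod_nonneg T (by omega)
  have hrm : r < m := Int.emod_lt_of_pos T hm'
  have hTqr : (m:ℤ) * q + r = T := by rw [hqdef, hrdef]; exact Int.mul_ediv_add_emod T m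
  set M : ℤ := (m:ℤ) * q ^ 2 + 2 * q * r + r with hMdef
  -- sum of sh
  have hshsum : (∑ i, sh i) = (m:ℤ) * (d' 0:ℤ) + (d' 0:ℤ) - S := by
    have h1 : (∑ i : Fin m, sh i)
        = ∑ i : Fin m, ((d' 0:ℤ) - (d' ((i:ℕ)+1):ℤ)) := rfl
    have h2 : (∑ i : Fin m, (d' ((i:ℕ)+1):ℤ)) = ∑ j ∈ Finset.range m, (d' (j+1):ℤ) :=
      Fin.sum_univ_eq_sum_range (fun j => (d' (j+1):ℤ)) m
    rw [h1, Finset.sum_sub_distrib, Finset.sum_const, Finset.card_univ,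
      Fintype.card_fin, nsmul_eq_mul, h2, hSdef, Finset.sum_range_succ']
    ring
  have hwsum : ∀ v : Fin m → ℤ, (∑ i, v i) = (d' 0:ℤ) →
      (∑ i, (sh i - v i)) = (m:ℤ) * q + r := by
    intro v hv
    rw [Finset.sum_sub_distrib, hv, hshsum, hTqr, hTdef]
    ring
  have key := fun (w : Fin m → ℤ) hw => aux_min m q r hr0 w hw
  -- facts about candidate minimizers
  have hrtm : r.toNat ≤ m := by omega
  have hAfacts : ∀ A : Finset (Fin m), A.card = r.toNat →
      (∑ i, (sh i - q - if i ∈ A then (1:ℤ) else 0)) = (d' 0:ℤ) ∧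
      (∑ i, (sh i - (sh i - q - if i ∈ A then (1:ℤ) else 0)) ^ 2) = M := by
    intro A hA
    have hAr : (A.card : ℤ) = r := by omega
    have hchi : ∑ i, (if i ∈ A then (1:ℤ) else 0) = A.card := by
      simp [Finset.sum_ite_mem]
    have hw : (∑ i, (q + if i ∈ A then (1:ℤ) else 0)) = (m:ℤ) * q + r := by
      rw [Finset.sum_add_distrib, hchi, hAr, Finset.sum_const, Finset.card_univ,
        Fintype.card_fin, nsmul_eq_mul]
    constructor
    · have h1 : (∑ i, (sh i - q - if i ∈ A then (1:ℤ) else 0))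
          = (∑ i, sh i) - ((m:ℤ) * q + r) := by
        have : (∑ i, (sh i - q - if i ∈ A then (1:ℤ) else 0))
            = (∑ i, sh i) - (∑ i, (q + if i ∈ A then (1:ℤ) else 0)) := by
          rw [← Finset.sum_sub_distrib]
          exact Finset.sum_congr rfl (fun i _ => by ring)
        rw [this, hw]
      rw [h1, hshsum, hTqr, hTdef]
      ring
    · have h2 : (∑ i, (sh i - (sh i - q - if i ∈ A then (1:ℤ) else 0)) ^ 2)
          = (∑ i, (q + if i ∈ A then (1:ℤ) else 0) ^ 2) :=
        Finset.sum_congr rfl (fun i _ => by ring_nf)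
      rw [h2]
      exact ((key _ hw).2).mpr ⟨A, hA, rfl⟩
  obtain ⟨A₀, -, hA₀⟩ := Finset.exists_subset_card_eq
    (s := (Finset.univ : Finset (Fin m))) (n := r.toNat) (by simpa using hrtm)
  have hM0 : 0 ≤ M := by
    rw [← (hAfacts A₀ hA₀).2]
    exact Finset.sum_nonneg (fun i _ => sq_nonneg _)
  -- value of Dhat
  have hmem : M.toNat ∈ {n : ℕ | ∃ v : Fin m → ℤ,
      (∑ i, v i) = (d' 0 : ℤ) ∧ (∑ i, (sh i - v i) ^ 2) = (n : ℤ)} := by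
    refine ⟨fun i => sh i - q - if i ∈ A₀ then (1:ℤ) else 0, (hAfacts A₀ hA₀).1, ?_⟩
    rw [(hAfacts A₀ hA₀).2]
    exact (Int.toNat_of_nonneg hM0).symm
  have hlb : ∀ n ∈ {n : ℕ | ∃ v : Fin m → ℤ,
      (∑ i, v i) = (d' 0 : ℤ) ∧ (∑ i, (sh i - v i) ^ 2) = (n : ℤ)}, M.toNat ≤ n := by
    rintro n ⟨v, hv1, hv2⟩
    have hle := (key (fun i => sh i - v i) (hwsum v hv1)).1
    rw [hv2] at hle
    omega
  have hDhat : Dhat = M.toNat :=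
    le_antisymm (Nat.sInf_le hmem) (le_csInf ⟨_, hmem⟩ hlb)
  have hDz : (Dhat : ℤ) = M := by
    rw [hDhat]; exact Int.toNat_of_nonneg hM0
  -- mod/div facts for S
  have hρ0 : 0 ≤ S % (m:ℤ) := Int.emod_nonneg _ hm'.ne'
  have hρm : S % (m:ℤ) < (m:ℤ) := Int.emod_lt_of_pos _ hm'
  have hSk : (m:ℤ) * (S / (m:ℤ)) + S % (m:ℤ) = S := Int.mul_ediv_add_emod S m
  have hcase : r + S % (m:ℤ) = 0 ∨ r + S % (m:ℤ) = (m:ℤ) := by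
    have h1 : r + S % (m:ℤ) = (m:ℤ) * ((d' 0:ℤ) - q - S / (m:ℤ)) := by
      have e1 : (m:ℤ) * q + r = (m:ℤ) * (d' 0:ℤ) - S := hTqr.trans hTdef
      linear_combination e1 + hSk
    have hcu : (d' 0:ℤ) - q - S / (m:ℤ) < 2 := by nlinarith
    have hcl : 0 ≤ (d' 0:ℤ) - q - S / (m:ℤ) := by nlinarith
    have hc01 : (d' 0:ℤ) - q - S / (m:ℤ) = 0 ∨ (d' 0:ℤ) - q - S / (m:ℤ) = 1 := by
      clear_value S sh Dhat T q r M
      omega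
    rcases hc01 with h | h <;> rw [h] at h1 <;> [left; right] <;> linarith
  have hrρ : r * ((m:ℤ) - r) = (S % (m:ℤ)) * ((m:ℤ) - S % (m:ℤ)) := by
    rcases hcase with h | h
    · have h2 : r = 0 ∧ S % (m:ℤ) = 0 := by clear_value S sh Dhat T q r M; omega
      rw [h2.1, h2.2]
    · rw [show (m:ℤ) - r = S % (m:ℤ) by clear_value S sh Dhat T q r M; omega,
        show (m:ℤ) - S % (m:ℤ) = r by clear_value S sh Dhat T q r M; omega]
      ring
  -- fract value
  have hm0 : (m:ℝ) ≠ 0 := by positivity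
  have hSkR : (m:ℝ) * (((S / (m:ℤ) : ℤ)):ℝ) + (((S % (m:ℤ) : ℤ)):ℝ) = (S:ℝ) := by
    exact_mod_cast congrArg (fun z : ℤ => (z:ℝ)) hSk
  have hfract : Int.fract ((S:ℝ)/(m:ℝ)) = (((S % (m:ℤ) : ℤ)):ℝ)/(m:ℝ) := by
    rw [Int.fract, floor_int_div_nat_real S m]
    field_simp
    linarith
  -- integer identity for M
  have hint : M * (m:ℤ) = T ^ 2 + (S % (m:ℤ)) * ((m:ℤ) - S % (m:ℤ)) := by
    rw [← hrρ, hMdef, ← hTqr]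
    ring
  constructor
  · -- the real-valued formula
    rw [hDhat]
    have hMreal : ((M.toNat : ℕ) : ℝ) = (M:ℝ) := by
      exact_mod_cast congrArg (fun z : ℤ => (z:ℝ)) (Int.toNat_of_nonneg hM0)
    rw [hMreal, hfract]
    clear hDhat hDz
    have hintR : (M:ℝ) * (m:ℝ) = ((T:ℤ):ℝ) ^ 2
        + (((S % (m:ℤ) : ℤ)):ℝ) * ((m:ℝ) - (((S % (m:ℤ) : ℤ)):ℝ)) := by
      exact_mod_cast congrArg (fun z : ℤ => (z:ℝ)) hint
    have hTR : ((T:ℤ):ℝ) = (m:ℝ) * ((d' 0 : ℕ):ℝ) - (S:ℝ) := by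
      rw [hTdef]; push_cast; ring
    rw [hTR] at hintR
    clear_value S sh Dhat T q r M
    field_simp
    nlinarith [hintR]
  · -- counting
    clear_value S sh Dhat T q r M
    have hinj : Function.Injective
        (fun A : Finset (Fin m) => fun i => sh i - q - if i ∈ A then (1:ℤ) else 0) := by
      intro A B hAB
      ext i
      have h := congrFun hAB i
      simp only at h
      by_cases hA : i ∈ A <;> by_cases hB : i ∈ B <;>
        simp [hA, hB] at h ⊢ <;> linarith
    have hsetEq : {v : Fin m → ℤ |
          (∑ i, v i) = (d' 0 : ℤ) ∧ (∑ i, (sh i - v i) ^ 2) = (Dhat : ℤ)} =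
        (fun A : Finset (Fin m) => fun i => sh i - q - if i ∈ A then (1:ℤ) else 0) ''
          {A : Finset (Fin m) | A.card = r.toNat} := by
      ext v
      simp only [Set.mem_setOf_eq, Set.mem_image]
      constructor
      · rintro ⟨hv1, hv2⟩
        obtain ⟨A, hA, hwe⟩ := ((key _ (hwsum v hv1)).2).mp ((hv2.trans hDz).trans hMdef)
        refine ⟨A, hA, ?_⟩
        funext i
        have h := congrFun hwe i
        linarith
      · rintro ⟨A, hA, rfl⟩
        exact ⟨(hAfacts A hA).1, by rw [hDz]; exact (hAfacts A hA).2⟩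
    rw [hsetEq, Set.ncard_image_of_injective _ hinj]
    have hpc : {A : Finset (Fin m) | A.card = r.toNat} =
        ((Finset.powersetCard r.toNat (Finset.univ : Finset (Fin m)) :
          Finset (Finset (Fin m))) : Set (Finset (Fin m))) := by
      ext A
      simp [Finset.mem_powersetCard]
    rw [hpc, Set.ncard_coe_finset, Finset.card_powersetCard, Finset.card_univ,
      Fintype.card_fin]
    -- compute the rounding floor
    have hhalf : ⌊(S:ℝ)/(m:ℝ) + 1/2⌋ = (2 * S + (m:ℤ)) / (2 * (m:ℤ)) := by
      have h1 : (S:ℝ)/(m:ℝ) + 1/2 = (((2 * S + (m:ℤ)) : ℤ):ℝ) / ((2 * m : ℕ):ℝ) := by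
        push_cast
        field_simp
      rw [h1, floor_int_div_nat_real]
      norm_cast
    have h2S : 2 * S + (m:ℤ) = (2 * (S % (m:ℤ)) + (m:ℤ)) + (S / (m:ℤ)) * (2 * (m:ℤ)) := by
      linear_combination (-2 : ℤ) * hSk
    have hediv : (2 * S + (m:ℤ)) / (2 * (m:ℤ)) =
        S / (m:ℤ) + (if 2 * (S % (m:ℤ)) < (m:ℤ) then 0 else 1) := by
      rw [h2S, Int.add_mul_ediv_right _ _ (by omega : 2 * (m:ℤ) ≠ 0)]
      by_cases hc : 2 * (S % (m:ℤ)) < (m:ℤ)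
      · rw [if_pos hc, Int.ediv_eq_zero_of_lt (by linarith) (by linarith)]
        ring
      · rw [if_neg hc,
          show 2 * (S % (m:ℤ)) + (m:ℤ)
              = (2 * (S % (m:ℤ)) - (m:ℤ)) + 1 * (2 * (m:ℤ)) by ring,
          Int.add_mul_ediv_right _ _ (by omega : 2 * (m:ℤ) ≠ 0),
          Int.ediv_eq_zero_of_lt (by linarith) (by linarith)]
        ring
    rw [hhalf, hediv]
    have hveq : S - (m:ℤ) * (S / (m:ℤ) + (if 2 * (S % (m:ℤ)) < (m:ℤ) then 0 else 1)) =
        S % (m:ℤ) - (m:ℤ) * (if 2 * (S % (m:ℤ)) < (m:ℤ) then 0 else 1) := by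
      rw [mul_add]
      linarith [hSk]
    rw [hveq]
    by_cases hc : 2 * (S % (m:ℤ)) < (m:ℤ)
    · rw [if_pos hc]
      rcases hcase with h | h
      · have h3 : (S % (m:ℤ) - (m:ℤ) * 0).natAbs = r.toNat := by
          omega
        rw [h3]
      · have h3 : (S % (m:ℤ) - (m:ℤ) * 0).natAbs = m - r.toNat := by
          omega
        rw [h3, Nat.choose_symm hrtm]
    · rw [if_neg hc]
      have h4 : (S % (m:ℤ) - (m:ℤ) * 1).natAbs = r.toNat := by
        rcases hcase with h | h <;> omega
      rw [h4]
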